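/- Every character on Y factors through a coordinate projection: if χ : Y → 𝕋 is a continuous homomorphism from Y into the multiplicative group of complex numbers of modulus 1, then there exist l ≥ 0 and a continuous homomorphism ψ : ℝ/r^l ℤ → 𝕋 such that χ = ψ ∘ π_l on Y. -/

import Mathlib

open scoped Real
noncomputable section

/-- `X = ∏_{l≥0} ℝ/r^l ℤ`, with coordinatewise addition and the product topology. -/
abbrev SolX (r : ℕ) := (l : ℕ) → AddCircle ((r : ℝ) ^ l)

/-- The natural homomorphism `ℝ/r^{l+1}ℤ → ℝ/r^l ℤ` induced by the identity on `ℝ`. -/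
def natHom (r l : ℕ) : AddCircle ((r : ℝ) ^ (l + 1)) →+ AddCircle ((r : ℝ) ^ l) :=
  QuotientAddGroup.map _ _ (AddMonoidHom.id ℝ) (by
    intro x hx
    rw [AddSubgroup.mem_comap]
    obtain ⟨k, hk⟩ := AddSubgroup.mem_zmultiples_iff.mp hx
    refine AddSubgroup.mem_zmultiples_iff.mpr ⟨k * (r : ℤ), ?_⟩
    simp only [AddMonoidHom.id_apply, zsmul_eq_mul] at hk ⊢
    rw [← hk]
    push_cast
    ring)

/-- `x ∈ X` is a coherent sequence if `x l` is the image of `x (l+1)` under the natural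
homomorphism, for every `l`. -/
def Coherent (r : ℕ) (x : SolX r) : Prop := ∀ l, natHom r l (x (l + 1)) = x l

/-- `Y`, the set of coherent sequences, as an additive subgroup of `X`. -/
def YSub (r : ℕ) : AddSubgroup (SolX r) where
  carrier := {x | Coherent r x}
  zero_mem' := fun l => by simp
  add_mem' := fun hx hy l => by
    simp only [Pi.add_apply, map_add]
    rw [hx l, hy l]
  neg_mem' := fun hx l => by
    simp only [Pi.neg_apply, map_neg]
    rw [hx l]

/-- Half-plane lemma: if `|z| = 1` and all powers of `z` have positive real part, `z = 1`. -/
lemma halfplane_triv (z : ℂ) (hz : ‖z‖ = 1) (h : ∀ n : ℕ, 0 < (z ^ n).re) : z = 1 := by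
  have hzexp : z = Complex.exp (z.arg * Complex.I) := by
    conv_lhs => rw [← Complex.norm_mul_exp_arg_mul_I z]
    rw [hz]; simp
  have hcos : ∀ n : ℕ, 0 < Real.cos (n * z.arg) := by
    intro n
    have hn := h n
    rw [hzexp, ← Complex.exp_nat_mul,
      show ((n : ℂ) * (↑z.arg * Complex.I)) = ((n * z.arg : ℝ) : ℂ) * Complex.I by
        push_cast; ring, Complex.exp_ofReal_mul_I_re] at hn
    exact hn
  have habs : |z.arg| ≤ π := Complex.abs_arg_le_pi z
  have hθ : z.arg = 0 := by
    by_contra hθ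
    have ht : 0 < |z.arg| := abs_pos.mpr hθ
    set t := |z.arg| with htdef
    have hcos' : ∀ n : ℕ, 0 < Real.cos (n * t) := by
      intro n
      rcases abs_cases z.arg with ⟨h1, _⟩ | ⟨h1, _⟩
      · rw [htdef, h1]; exact hcos n
      · rw [show (n : ℝ) * t = -(n * z.arg) by rw [htdef, h1]; ring, Real.cos_neg]
        exact hcos n
    set n := ⌈(π / 2) / t⌉₊ with hndef
    have h1 : π / 2 ≤ n * t := by
      have h2 := Nat.le_ceil ((π / 2) / t)
      have := mul_le_mul_of_nonneg_right h2 (le_of_lt ht)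
      rwa [div_mul_cancel₀ _ (ne_of_gt ht)] at this
    have h2 : (n : ℝ) * t ≤ π + π / 2 := by
      have hnn : (0:ℝ) ≤ (π / 2) / t := by positivity
      have hn : (n : ℝ) < (π / 2) / t + 1 := Nat.ceil_lt_add_one hnn
      have := mul_lt_mul_of_pos_right hn ht
      rw [add_mul, div_mul_cancel₀ _ (ne_of_gt ht), one_mul] at this
      linarith
    have := Real.cos_nonpos_of_pi_div_two_le_of_le h1 h2
    linarith [hcos' n]
  rw [hzexp, hθ]; simp

/-- A coherent sequence vanishing at a coordinate vanishes at all lower coordinates. -/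
lemma coherent_zero_down (r : ℕ) (x : SolX r) (hx : Coherent r x) :
    ∀ k j, x (j + k) = 0 → x j = 0 := by
  intro k
  induction k with
  | zero => intro j h; exact h
  | succ k ih =>
    intro j h
    have h1 : x (j + 1) = 0 := ih (j + 1) (by rwa [show j + 1 + k = j + (k + 1) by ring])
    rw [← hx j, h1, map_zero]

theorem stmt_17 (r : ℕ) (hr : 2 ≤ r) (χ : YSub r → ℂ) (hχcont : Continuous χ)
    (hχabs : ∀ y, ‖χ y‖ = 1)
    (hχmul : ∀ y z : YSub r, χ (y + z) = χ y * χ z) :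
    ∃ (l : ℕ) (ψ : AddCircle ((r : ℝ) ^ l) → ℂ), Continuous ψ ∧
      (∀ u, ‖ψ u‖ = 1) ∧
      (∀ u v, ψ (u + v) = ψ u * ψ v) ∧
      ∀ y : YSub r, χ y = ψ ((y : SolX r) l) := by
  -- χ never vanishes and χ 0 = 1
  have hne : ∀ y, χ y ≠ 0 := by
    intro y h0
    have := hχabs y
    rw [h0] at this
    simp at this
  have hχ0 : χ 0 = 1 := by
    have h := hχmul 0 0
    rw [add_zero] at h
    have h2 : χ 0 * 1 = χ 0 * χ 0 := by rw [mul_one]; exact h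
    exact (mul_left_cancel₀ (hne 0) h2).symm
  -- χ of multiples
  have hpow : ∀ (y : YSub r) (n : ℕ), χ (n • y) = χ y ^ n := by
    intro y n
    induction n with
    | zero => simpa using hχ0
    | succ n ih => rw [succ_nsmul, hχmul, ih, pow_succ]
  -- find l such that χ is trivial on the kernel of π_l
  have hU : χ ⁻¹' {z : ℂ | 0 < z.re} ∈ nhds (0 : YSub r) := by
    apply hχcont.continuousAt.preimage_mem_nhds
    rw [hχ0]
    exact (isOpen_lt continuous_const Complex.continuous_re).mem_nhds (by norm_num)
  rw [show (0 : YSub r) = ⟨0, (YSub r).zero_mem⟩ from rfl, nhds_subtype_eq_comap,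
    Filter.mem_comap] at hU
  obtain ⟨V, hV, hVsub⟩ := hU
  rw [nhds_pi, Filter.mem_pi] at hV
  obtain ⟨I, hIfin, t, ht, htV⟩ := hV
  obtain ⟨l, hl⟩ : ∃ l, ∀ i ∈ I, i ≤ l := by
    rcases hIfin.bddAbove with ⟨l, hl⟩
    exact ⟨l, fun i hi => hl hi⟩
  -- kernel triviality
  have hker : ∀ y : YSub r, (y : SolX r) l = 0 → χ y = 1 := by
    intro y hy
    apply halfplane_triv _ (hχabs y)
    intro n
    rw [← hpow]
    have hmem : ((n • y : YSub r) : SolX r) ∈ V := by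
      apply htV
      intro i hi
      have hzero : ((n • y : YSub r) : SolX r) i = 0 := by
        apply coherent_zero_down r _ (n • y).2 (l - i) i
        rw [Nat.add_sub_cancel' (hl i hi)]
        show (n • (y : SolX r)) l = 0
        rw [Pi.smul_apply, hy, smul_zero]
      rw [hzero]
      exact mem_of_mem_nhds (ht i)
    exact hVsub hmem
  -- the diagonal section ℝ → Y
  have hs_coh : ∀ u : ℝ, Coherent r (fun j => (u : AddCircle ((r : ℝ) ^ j))) := by
    intro u j
    exact QuotientAddGroup.map_mk _ _ _ _ u
  set s : ℝ → YSub r := fun u => ⟨fun j => (u : AddCircle ((r : ℝ) ^ j)), hs_coh u⟩ with hs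
  have hs_add : ∀ u v : ℝ, s (u + v) = s u + s v := by
    intro u v
    apply Subtype.ext
    funext j
    rfl
  have hs_cont : Continuous s := by
    apply Continuous.subtype_mk
    exact continuous_pi fun j => AddCircle.continuous_mk' _
  -- triviality of χ ∘ s on r^l ℤ
  have hst : ∀ u v : ℝ, -u + v ∈ AddSubgroup.zmultiples ((r : ℝ) ^ l) →
      χ (s u) = χ (s v) := by
    intro u v huv
    have h1 : χ (s (-u + v)) = 1 := by
      apply hker
      show ((-u + v : ℝ) : AddCircle ((r : ℝ) ^ l)) = 0
      exact (QuotientAddGroup.eq_zero_iff _).mpr huv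
    have h2 : χ (s v) = χ (s u) * χ (s (-u + v)) := by
      rw [← hχmul, ← hs_add]
      congr 1
      congr 1
      ring
    rw [h2, h1, mul_one]
  -- define ψ
  set ψ : AddCircle ((r : ℝ) ^ l) → ℂ := fun x =>
    Quotient.liftOn' x (fun u => χ (s u))
      (fun u v huv => hst u v (QuotientAddGroup.leftRel_apply.mp huv)) with hψ
  have hψmk : ∀ u : ℝ, ψ ((u : AddCircle ((r : ℝ) ^ l))) = χ (s u) := fun u => rfl
  refine ⟨l, ψ, ?_, ?_, ?_, ?_⟩
  · exact Continuous.quotient_liftOn' (hχcont.comp hs_cont) _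
  · intro x
    induction x using QuotientAddGroup.induction_on with
    | _ u => rw [hψmk]; exact hχabs _
  · intro x y
    induction x using QuotientAddGroup.induction_on with
    | _ u =>
      induction y using QuotientAddGroup.induction_on with
      | _ v =>
        have : ((u : AddCircle ((r : ℝ) ^ l))) + v = ((u + v : ℝ) : AddCircle ((r : ℝ) ^ l)) :=
          rfl
        rw [this, hψmk, hψmk, hψmk, hs_add, hχmul]
  · intro y
    obtain ⟨u, hu⟩ := QuotientAddGroup.mk_surjective ((y : SolX r) l)
    have hk : χ (y - s u) = 1 := by
      apply hker
      show (y : SolX r) l - (u : AddCircle ((r : ℝ) ^ l)) = 0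
      rw [← hu]
      exact sub_self _
    have : χ y = χ (y - s u) * χ (s u) := by
      rw [← hχmul]
      congr 1
      abel
    rw [this, hk, one_mul, ← hψmk, hu]
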